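/- Let F be a homogeneous polynomial of degree 3 over ℂ in x_0, x_1, x_2, x_3 and let f_0 := x_4^3 − F(x_0,x_1,x_2,x_3) + x_5·(x_0·x_3 − x_1·x_2) (the case t = 0, the cuspidal cyclic cubic fourfold). A 2-dimensional linear subspace W ⊆ ℂ^6 with e_5 ∈ W satisfies f_0(v) = 0 for all v ∈ W if and only if there exists a nonzero u ∈ W with u_5 = 0, u_0·u_3 = u_1·u_2, u_4^3 = F(u_0,u_1,u_2,u_3), and W = span{e_5, u}. (Equivalently: the lines on Y_{F,0} through the cusp point p_0 are exactly the lines joining p_0 to a point of the K3 surface S ⊂ ℙ^4 defined by x_4^3 = F and x_0·x_3 = x_1·x_2.) -/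
import Mathlib


open MvPolynomial

/-- The cubic form `f₀ = x₄³ − F(x₀,x₁,x₂,x₃) + x₅(x₀x₃ − x₁x₂)` defining the
cuspidal cyclic cubic fourfold `Y_{F,0} ⊂ ℙ⁵`. -/
noncomputable def f0Poly (F : MvPolynomial (Fin 4) ℂ) : MvPolynomial (Fin 6) ℂ :=
  X 4 ^ 3 - rename (Fin.castLE (by norm_num)) F
    + X 5 * (X 0 * X 3 - X 1 * X 2)

/-- The vector `e₅ = (0,0,0,0,0,1)`, representing the point `p₀ = [0:0:0:0:0:1]`. -/
def e5 : Fin 6 → ℂ := ![0, 0, 0, 0, 0, 1]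


lemma e5_apply_0 : e5 0 = 0 := rfl
lemma e5_apply_1 : e5 1 = 0 := rfl
lemma e5_apply_2 : e5 2 = 0 := rfl
lemma e5_apply_3 : e5 3 = 0 := rfl
lemma e5_apply_4 : e5 4 = 0 := rfl
lemma e5_apply_5 : e5 5 = 1 := rfl

lemma e5_ne_zero : e5 ≠ 0 := by
  intro h0
  have := congrFun h0 5
  rw [e5_apply_5] at this
  simpa using this

lemma homog_eval_smul {n : ℕ} {φ : MvPolynomial (Fin 4) ℂ} (h : φ.IsHomogeneous n)
    (c : ℂ) (x : Fin 4 → ℂ) : eval (c • x) φ = c ^ n * eval x φ := by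
  rw [eval_eq, eval_eq, Finset.mul_sum]
  refine Finset.sum_congr rfl fun d hd => ?_
  have hdeg : ∑ i ∈ d.support, d i = n := by
    have := h (mem_support_iff.mp hd)
    simpa [Finsupp.weight, Finsupp.linearCombination, Finsupp.sum] using this
  simp only [Pi.smul_apply, smul_eq_mul, mul_pow, Finset.prod_mul_distrib,
    Finset.prod_pow_eq_pow_sum, hdeg]
  ring

lemma eval_f0 (F : MvPolynomial (Fin 4) ℂ) (v : Fin 6 → ℂ) :
    eval v (f0Poly F) = v 4 ^ 3 - eval ![v 0, v 1, v 2, v 3] F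
      + v 5 * (v 0 * v 3 - v 1 * v 2) := by
  have hc : v ∘ Fin.castLE (show 4 ≤ 6 by norm_num) = ![v 0, v 1, v 2, v 3] := by
    funext i; fin_cases i <;> rfl
  simp [f0Poly, eval_rename, hc]

/-- The lines on `Y_{F,0}` through the cusp point `p₀` are exactly the lines joining
`p₀` to a point of the K3 surface `S ⊂ ℙ⁴` defined by `x₄³ = F` and `x₀x₃ = x₁x₂`. -/
theorem stmt2 (F : MvPolynomial (Fin 4) ℂ) (hF : F.IsHomogeneous 3)
    (W : Submodule ℂ (Fin 6 → ℂ)) (hWdim : Module.finrank ℂ ↥W = 2) (he5 : e5 ∈ W) :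
    (∀ v ∈ W, eval v (f0Poly F) = 0) ↔
      ∃ u : Fin 6 → ℂ, u ∈ W ∧ u ≠ 0 ∧ u 5 = 0 ∧ u 0 * u 3 = u 1 * u 2 ∧
        u 4 ^ 3 = eval ![u 0, u 1, u 2, u 3] F ∧
        W = Submodule.span ℂ {e5, u} := by

  constructor
  · intro hvan
    obtain ⟨w, hwW, hwns⟩ : ∃ w ∈ W, w ∉ Submodule.span ℂ {e5} := by
      by_contra h
      push_neg at h
      have hle : W ≤ Submodule.span ℂ {e5} := h
      have := Submodule.finrank_mono hle
      rw [hWdim, finrank_span_singleton e5_ne_zero] at this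
      omega
    set u : Fin 6 → ℂ := w - w 5 • e5 with hu
    have hu5 : u 5 = 0 := by
      show w 5 - w 5 • e5 5 = 0
      rw [e5_apply_5]; simp
    have huW : u ∈ W := W.sub_mem hwW (W.smul_mem _ he5)
    have hune : u ≠ 0 := by
      intro h0
      exact hwns (Submodule.mem_span_singleton.mpr ⟨w 5, (sub_eq_zero.mp h0).symm⟩)
    have hli : LinearIndependent ℂ ![e5, u] := by
      rw [LinearIndependent.pair_iff' e5_ne_zero]
      intro a ha
      apply hune
      have : u 5 = (a • e5) 5 := by rw [ha]
      rw [hu5, Pi.smul_apply, e5_apply_5, smul_eq_mul, mul_one] at this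
      rw [← ha, ← this, zero_smul]
    have hspan : W = Submodule.span ℂ {e5, u} := by
      refine (Submodule.eq_of_le_of_finrank_le ?_ ?_).symm
      · rw [Submodule.span_le, Set.insert_subset_iff, Set.singleton_subset_iff]
        exact ⟨he5, huW⟩
      · rw [hWdim]
        have hr : Set.range ![e5, u] = {e5, u} := by
          simp [Matrix.range_cons, Matrix.range_cons_empty]
          exact Set.pair_comm u e5
        rw [← hr, finrank_span_eq_card hli]
        simp
    have h1 := hvan u huW
    rw [eval_f0, hu5] at h1
    have h2 := hvan (e5 + u) (W.add_mem he5 huW)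
    rw [eval_f0] at h2
    simp only [Pi.add_apply, e5_apply_0, e5_apply_1, e5_apply_2, e5_apply_3, e5_apply_4,
      e5_apply_5, zero_add, hu5, add_zero] at h2
    refine ⟨u, huW, hune, hu5, ?_, ?_, hspan⟩
    · linear_combination h2 - h1
    · linear_combination h1
  · rintro ⟨u, huW, hune, hu5, hquad, hcub, rfl⟩
    intro v hv
    rw [Submodule.mem_span_pair] at hv
    obtain ⟨a, b, rfl⟩ := hv
    rw [eval_f0]
    simp only [Pi.add_apply, Pi.smul_apply, smul_eq_mul, e5_apply_0, e5_apply_1, e5_apply_2,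
      e5_apply_3, e5_apply_4, e5_apply_5, mul_zero, zero_add, mul_one, hu5, add_zero]
    have hv4 : ![b * u 0, b * u 1, b * u 2, b * u 3] = b • ![u 0, u 1, u 2, u 3] := by
      funext i; fin_cases i <;> simp
    rw [hv4, homog_eval_smul hF]
    linear_combination b ^ 3 * hcub + a * b ^ 2 * hquad
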